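/- arXiv:1203.2300 — 8 statements merged into one kernel-verified Lean document; each statement's English description precedes it below -/
import Mathlib

section
/- Let G be a group and let B ⊆ G be a big subset. Let P be the group presented by generators [b], one for each element b ∈ B, subject to the relations [b₁]·[b₂] = [b₁b₂] whenever b₁, b₂ and b₁b₂ all lie in B (i.e., P is the quotient of the free group on the set B by the normal closure of the set of words [b₁]·[b₂]·[b₁b₂]⁻¹ for all b₁, b₂ ∈ B with b₁b₂ ∈ B). Then the canonical group homomorphism P → G induced by [b] ↦ b is an isomorphism (bijective). -/
open Pointwise

/-- A subset `B` of a group `G` is *big* if for any `g₁ g₂ g₃ ∈ G` one has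
`B⁻¹ ∩ Bg₁ ∩ Bg₂ ∩ Bg₃ ≠ ∅`. -/
def IsBig {G : Type*} [Group G] (B : Set G) : Prop :=
  ∀ g₁ g₂ g₃ : G, (B⁻¹ ∩ (B * {g₁}) ∩ (B * {g₂}) ∩ (B * {g₃})).Nonempty

/-- Weil's lemma (Lemma `big-lem`(i) of the paper): if `B ⊆ G` is a big subset, then the
group presented by generators `[b]`, `b ∈ B`, with relations `[b₁][b₂] = [b₁b₂]` whenever
`b₁, b₂, b₁b₂ ∈ B`, maps isomorphically onto `G` via `[b] ↦ b`. -/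
theorem big_subset_presentation_bijective {G : Type*} [Group G] (B : Set G) (hB : IsBig B)
    (rels : Set (FreeGroup B))
    (hrels : rels = {w : FreeGroup B | ∃ (b₁ b₂ : B) (h : (b₁ : G) * (b₂ : G) ∈ B),
      w = FreeGroup.of b₁ * FreeGroup.of b₂ * (FreeGroup.of (⟨(b₁ : G) * (b₂ : G), h⟩ : B))⁻¹})
    (h : ∀ r ∈ rels, FreeGroup.lift (fun b : B => (b : G)) r = 1) :
    Function.Bijective (PresentedGroup.toGroup h) := by
  -- extracting membership in a right translate
  have memmul : ∀ z g : G, z ∈ B * {g} → ∃ b : B, z = (b : G) * g := by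
    intro z g hz
    rw [Set.mem_mul] at hz
    obtain ⟨b, hb, y, hy, hzy⟩ := hz
    rw [Set.mem_singleton_iff] at hy
    exact ⟨⟨b, hb⟩, by rw [← hzy, hy]⟩
  -- the basic relation in the presented group
  have key : ∀ u s t : B, (u : G) * s = t →
      (PresentedGroup.of u * PresentedGroup.of s : PresentedGroup rels)
        = PresentedGroup.of t := by
    intro u s t hust
    have hmemB : (u : G) * s ∈ B := hust ▸ t.2
    have ht : (⟨(u : G) * s, hmemB⟩ : B) = t := Subtype.ext hust
    have hmem : FreeGroup.of u * FreeGroup.of s * (FreeGroup.of t)⁻¹ ∈ rels := by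
      rw [hrels]
      exact ⟨u, s, hmemB, by rw [ht]⟩
    have h1 : (PresentedGroup.mk rels)
        (FreeGroup.of u * FreeGroup.of s * (FreeGroup.of t)⁻¹) = 1 := by
      exact (QuotientGroup.eq_one_iff _).mpr (Subgroup.subset_normalClosure hmem)
    rw [map_mul, map_mul, map_inv] at h1
    exact mul_inv_eq_one.mp h1
  -- every element of `G` is a product of two elements of `B`
  have fromB : ∀ g : G, ∃ u s : B, (u : G) * s = g := by
    intro g
    obtain ⟨z, ⟨⟨hz1, hz2⟩, -⟩, -⟩ := hB g⁻¹ g⁻¹ g⁻¹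
    rw [Set.mem_inv] at hz1
    obtain ⟨s, hs⟩ := memmul _ _ hz2
    refine ⟨⟨z⁻¹, hz1⟩, s, ?_⟩
    show z⁻¹ * (s : G) = g
    rw [hs]
    group
  -- well-definedness: two-letter words with the same value in `G` agree in `P`
  have W : ∀ u s u' s' : B, (u : G) * s = (u' : G) * s' →
      (PresentedGroup.of u * PresentedGroup.of s : PresentedGroup rels)
        = PresentedGroup.of u' * PresentedGroup.of s' := by
    intro u s u' s' huss
    obtain ⟨z, ⟨⟨hz1, hz2⟩, hz3⟩, hz4⟩ := hB (u : G)⁻¹ (u' : G)⁻¹ ((u : G) * s)⁻¹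
    rw [Set.mem_inv] at hz1
    obtain ⟨p, hp⟩ := memmul _ _ hz2
    obtain ⟨p', hp'⟩ := memmul _ _ hz3
    obtain ⟨q, hq⟩ := memmul _ _ hz4
    have hpv : (p : G) = z * u := by rw [hp]; group
    have hpv' : (p' : G) = z * u' := by rw [hp']; group
    have hqv : (q : G) = z * ((u : G) * s) := by rw [hq]; group
    set t : B := ⟨z⁻¹, hz1⟩ with htdef
    have h1 : (t : G) * p = u := by show z⁻¹ * (p : G) = u; rw [hpv]; group
    have h1' : (t : G) * p' = u' := by show z⁻¹ * (p' : G) = u'; rw [hpv']; group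
    have h2 : (p : G) * s = q := by rw [hpv, hqv]; group
    have h2' : (p' : G) * s' = q := by rw [hpv', hqv, mul_assoc, huss]
    calc (PresentedGroup.of u * PresentedGroup.of s : PresentedGroup rels)
        = (PresentedGroup.of t * PresentedGroup.of p) * PresentedGroup.of s := by
          rw [key t p u h1]
      _ = PresentedGroup.of t * (PresentedGroup.of p * PresentedGroup.of s) := mul_assoc _ _ _
      _ = PresentedGroup.of t * PresentedGroup.of q := by rw [key p s q h2]
      _ = PresentedGroup.of t * (PresentedGroup.of p' * PresentedGroup.of s') := by
          rw [key p' s' q h2']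
      _ = (PresentedGroup.of t * PresentedGroup.of p') * PresentedGroup.of s' :=
          (mul_assoc _ _ _).symm
      _ = PresentedGroup.of u' * PresentedGroup.of s' := by rw [key t p' u' h1']
  -- collapsing: a three-letter word equals some two-letter word with the same value
  have C : ∀ u s v : B, ∃ c d : B, (c : G) * d = (u : G) * s * v ∧
      (PresentedGroup.of u * PresentedGroup.of s * PresentedGroup.of v : PresentedGroup rels)
        = PresentedGroup.of c * PresentedGroup.of d := by
    intro u s v
    obtain ⟨z, ⟨⟨hz1, hz2⟩, hz3⟩, hz4⟩ := hB (u : G)⁻¹ ((u : G) * s)⁻¹ ((u : G) * s * v)⁻¹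
    rw [Set.mem_inv] at hz1
    obtain ⟨p, hp⟩ := memmul _ _ hz2
    obtain ⟨q, hq⟩ := memmul _ _ hz3
    obtain ⟨d, hd⟩ := memmul _ _ hz4
    have hpv : (p : G) = z * u := by rw [hp]; group
    have hqv : (q : G) = z * ((u : G) * s) := by rw [hq]; group
    have hdv : (d : G) = z * ((u : G) * s * v) := by rw [hd]; group
    set c : B := ⟨z⁻¹, hz1⟩ with hcdef
    have h1 : (c : G) * p = u := by show z⁻¹ * (p : G) = u; rw [hpv]; group
    have h2 : (p : G) * s = q := by rw [hpv, hqv]; group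
    have h3 : (q : G) * v = d := by rw [hqv, hdv]; group
    refine ⟨c, d, ?_, ?_⟩
    · show z⁻¹ * (d : G) = _
      rw [hdv]; group
    · rw [← key c p u h1, mul_assoc (PresentedGroup.of c), key p s q h2,
        mul_assoc (PresentedGroup.of c), key q v d h3]
  -- the inverse map
  choose U S hUS using fromB
  set ψ : G → PresentedGroup rels :=
    fun g => PresentedGroup.of (U g) * PresentedGroup.of (S g) with hψdef
  have ψspec : ∀ (g : G) (u s : B), (u : G) * s = g →
      PresentedGroup.of u * PresentedGroup.of s = ψ g := by
    intro g u s hus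
    exact W u s (U g) (S g) (by rw [hus, hUS g])
  have ψmul : ∀ g₁ g₂ : G, ψ (g₁ * g₂) = ψ g₁ * ψ g₂ := by
    intro g₁ g₂
    obtain ⟨c, d, hcd, hC⟩ := C (U g₁) (S g₁) (U g₂)
    obtain ⟨c', d', hcd', hC'⟩ := C c d (S g₂)
    have hval : (c' : G) * d' = g₁ * g₂ := by
      rw [hcd', hcd, hUS g₁, mul_assoc, hUS g₂]
    have : ψ g₁ * ψ g₂ = PresentedGroup.of c' * PresentedGroup.of d' := by
      show (PresentedGroup.of (U g₁) * PresentedGroup.of (S g₁)) *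
        (PresentedGroup.of (U g₂) * PresentedGroup.of (S g₂)) = _
      rw [← mul_assoc, hC, hC']
    rw [this]
    exact (ψspec (g₁ * g₂) c' d' hval).symm
  have ψone : ψ 1 = 1 := by
    have h11 := ψmul 1 1
    rw [mul_one] at h11
    exact left_eq_mul.mp h11
  have ψinv : ∀ g : G, ψ g⁻¹ = (ψ g)⁻¹ := by
    intro g
    have : ψ g⁻¹ * ψ g = 1 := by rw [← ψmul, inv_mul_cancel, ψone]
    exact eq_inv_of_mul_eq_one_left this
  have ψof : ∀ b : B, ψ (b : G) = PresentedGroup.of b := fun b => key (U b) (S b) b (hUS b)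
  -- left inverse property
  have left : ∀ x : PresentedGroup rels, ψ (PresentedGroup.toGroup h x) = x := by
    intro x
    induction x with
    | _ w =>
      induction w using FreeGroup.induction_on with
      | C1 => rw [map_one, map_one, ψone]
      | of b =>
        show ψ (PresentedGroup.toGroup h (PresentedGroup.of b)) = PresentedGroup.of b
        rw [PresentedGroup.toGroup.of]
        exact ψof b
      | inv_of b ih =>
        rw [map_inv, map_inv, ψinv, ih]
      | mul x y ihx ihy =>
        rw [map_mul, map_mul, ψmul, ihx, ihy]
  constructor
  · intro x y hxy
    rw [← left x, ← left y, hxy]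
  · intro g
    refine ⟨ψ g, ?_⟩
    show PresentedGroup.toGroup h (PresentedGroup.of (U g) * PresentedGroup.of (S g)) = g
    rw [map_mul, PresentedGroup.toGroup.of, PresentedGroup.toGroup.of, hUS]
end

section
/- Let G be a group, Z an abelian group (written additively), and let c, c' : G × G → Z be two 2-cocycles, i.e. c(g₁,g₂) + c(g₁g₂,g₃) = c(g₁,g₂g₃) + c(g₂,g₃) for all g₁,g₂,g₃ ∈ G, and similarly для c'. Let B ⊆ G be a big subset and suppose that c(b₁,b₂) = c'(b₁,b₂) for all b₁, b₂ ∈ B with b₁b₂ ∈ B. Then there exists a unique function θ : G → Z such that θ(b) = 0 for all b ∈ B and θ(g₁) + θ(g₂) + c'(g₁,g₂) = θ(g₁g₂) + c(g₁,g₂) for all g₁, g₂ ∈ G. (Equivalently: the map (z,g) ↦ (z + θ(g), g) is the unique isomorphism between the central extensions Z × G with products (z₁,g₁)(z₂,g₂) = (z₁+z₂+c(g₁,g₂), g₁g₂) and (z₁,g₁)(z₂,g₂) = (z₁+z₂+c'(g₁,g₂), g₁g₂) that is identical on Z and sends (0,b) to (0,b) for each b ∈ B.) -/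
open Pointwise

theorem bigaux {G : Type*} [Group G] {Z : Type*} [AddCommGroup Z]
    (d : G → G → Z)
    (hd : ∀ g₁ g₂ g₃ : G, d g₁ g₂ + d (g₁ * g₂) g₃ = d g₁ (g₂ * g₃) + d g₂ g₃)
    (B : Set G) (hB : IsBig B)
    (h0 : ∀ b₁ b₂ : G, b₁ ∈ B → b₂ ∈ B → b₁ * b₂ ∈ B → d b₁ b₂ = 0) :
    ∃! θ : G → Z, (∀ b ∈ B, θ b = 0) ∧
      ∀ g₁ g₂ : G, θ g₁ + θ g₂ = θ (g₁ * g₂) + d g₁ g₂ := by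
  classical
  -- membership helper
  have hmem : ∀ {x g : G}, x ∈ B * ({g} : Set G) → x * g⁻¹ ∈ B := by
    intro x g hx
    rw [Set.mem_mul] at hx
    obtain ⟨b, hb, y, hy, hxy⟩ := hx
    rw [Set.mem_singleton_iff] at hy
    subst hy
    simpa [← hxy, mul_assoc] using hb
  have hinv : ∀ {x : G}, x ∈ B⁻¹ → x⁻¹ ∈ B := fun hx => Set.mem_inv.mp hx
  -- normalization
  have h1g : ∀ g : G, d 1 g = d 1 1 := by
    intro g
    have h := hd 1 1 g
    simp only [one_mul] at h
    exact add_right_cancel h.symm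
  have hg1 : ∀ g : G, d g 1 = d 1 1 := by
    intro g
    have h := hd g 1 1
    simp only [mul_one] at h
    exact add_left_cancel h
  have hsym : ∀ x : G, d x x⁻¹ = d x⁻¹ x := by
    intro x
    have h := hd x x⁻¹ x
    rw [mul_inv_cancel, inv_mul_cancel, h1g x, hg1 x] at h
    exact add_right_cancel (h.trans (add_comm _ _))
  -- Lemma A : x, x⁻¹ ∈ B ⇒ d x x⁻¹ = - d 1 1
  have hA : ∀ x : G, x ∈ B → x⁻¹ ∈ B → d x x⁻¹ = - d 1 1 := by
    intro x hx hxi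
    obtain ⟨u, hu⟩ := hB x 1 1
    obtain ⟨⟨⟨hu1, hu2⟩, hu3⟩, -⟩ := hu
    have huB : u ∈ B := by simpa using hmem hu3
    have hb' : u * x⁻¹ ∈ B := hmem hu2
    have h := hd (u * x⁻¹) x x⁻¹
    rw [inv_mul_cancel_right, mul_inv_cancel, hg1] at h
    rw [h0 _ _ hb' hx (by simpa [inv_mul_cancel_right] using huB),
      h0 _ _ huB hxi (by simpa using hb')] at h
    -- h : 0 + 0 = d 1 1 + d x x⁻¹
    rw [eq_neg_iff_add_eq_zero, add_comm]
    simpa using h.symm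
  -- Lemma B : representation independence
  have hBrep : ∀ p q r s : G, p ∈ B → q ∈ B → r ∈ B → s ∈ B → p * q = r * s →
      d p q = d r s := by
    intro p q r s hp hq hr hs hpqrs
    obtain ⟨x, hx⟩ := hB (p * q)⁻¹ p⁻¹ r⁻¹
    obtain ⟨⟨⟨hx1, hx2⟩, hx3⟩, hx4⟩ := hx
    have hxB : x⁻¹ ∈ B := hinv hx1
    have hxm : x * (p * q) ∈ B := by simpa using hmem hx2
    have hxp : x * p ∈ B := by simpa using hmem hx3
    have hxr : x * r ∈ B := by simpa using hmem hx4
    have key : ∀ a b : G, a ∈ B → b ∈ B → a * b = p * q → x * a ∈ B →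
        d a b = d x⁻¹ (x * (p * q)) := by
      intro a b ha hb hab hxa
      have h := hd x⁻¹ (x * a) b
      rw [inv_mul_cancel_left] at h
      rw [h0 _ _ hxB hxa (by simpa [inv_mul_cancel_left] using ha),
        h0 _ _ hxa hb (by simpa [mul_assoc, hab] using hxm)] at h
      rw [mul_assoc, hab] at h
      simpa using h
    rw [key p q hp hq rfl hxp, key r s hr hs hpqrs.symm hxr]
  -- the function θ, characterized by its values on representations
  obtain ⟨θ, hC⟩ : ∃ θ : G → Z, ∀ g p q : G, p ∈ B → q ∈ B → p * q = g⁻¹ →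
      θ g = d p q + d 1 1 + d g⁻¹ g := by
    refine ⟨fun g => d ((hB g g g).some)⁻¹ ((hB g g g).some * g⁻¹) + d 1 1 + d g⁻¹ g, ?_⟩
    intro g p q hp hq hpq
    beta_reduce
    obtain ⟨⟨⟨hx1, hx2⟩, -⟩, -⟩ := (hB g g g).some_mem
    have h1 : ((hB g g g).some)⁻¹ ∈ B := hinv hx1
    have h2 : (hB g g g).some * g⁻¹ ∈ B := hmem hx2
    rw [hBrep _ _ p q h1 h2 hp hq (by rw [inv_mul_cancel_left, hpq])]
  -- Lemma D : θ x = d 1 1 + d x⁻¹ x when x⁻¹ ∈ B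
  have hD : ∀ x : G, x⁻¹ ∈ B → θ x = d 1 1 + d x⁻¹ x := by
    intro x hxi
    obtain ⟨w, hw⟩ := hB x 1 1
    obtain ⟨⟨⟨hw1, hw2⟩, -⟩, -⟩ := hw
    have hp : w⁻¹ ∈ B := hinv hw1
    have hq : w * x⁻¹ ∈ B := hmem hw2
    rw [hC x w⁻¹ (w * x⁻¹) hp hq (inv_mul_cancel_left _ _),
      h0 _ _ hp hq (by rw [inv_mul_cancel_left]; exact hxi), zero_add]
  -- vanishing on B
  have hV : ∀ b ∈ B, θ b = 0 := by
    intro b hbB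
    obtain ⟨w, hw⟩ := hB b 1 1
    obtain ⟨⟨⟨hw1, hw2⟩, hw3⟩, -⟩ := hw
    have hp : w⁻¹ ∈ B := hinv hw1
    have hq : w * b⁻¹ ∈ B := hmem hw2
    have hwB : w ∈ B := by simpa using hmem hw3
    have h := hd w⁻¹ (w * b⁻¹) b
    rw [inv_mul_cancel_left, inv_mul_cancel_right] at h
    rw [h0 _ _ hq hbB (by simpa [inv_mul_cancel_right] using hwB), add_zero] at h
    -- h : d w⁻¹ (w * b⁻¹) + d b⁻¹ b = d w⁻¹ w + 0
    have hww : d w⁻¹ w = - d 1 1 := by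
      have := hA w⁻¹ hp (by simpa using hwB)
      simpa using this
    rw [hC b w⁻¹ (w * b⁻¹) hp hq (inv_mul_cancel_left _ _)]
    have h2 : d w⁻¹ (w * b⁻¹) = - d 1 1 - d b⁻¹ b := by
      rw [← hww, eq_sub_iff_add_eq, h]
    rw [h2]; abel
  -- Star lemma
  have hS : ∀ b g : G, b ∈ B → θ (b * g) = θ g - d b g := by
    intro b g hbB
    obtain ⟨x, hx⟩ := hB (b * g) g g
    obtain ⟨⟨⟨hx1, hx2⟩, hx3⟩, -⟩ := hx
    have hp : x⁻¹ ∈ B := hinv hx1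
    have hq : x * (b * g)⁻¹ ∈ B := hmem hx2
    have hqb : x * (b * g)⁻¹ * b ∈ B := by
      simpa [mul_inv_rev, mul_assoc] using hmem hx3
    have e1 : θ (b * g) = d x⁻¹ (x * (b * g)⁻¹) + d 1 1 + d (b * g)⁻¹ (b * g) :=
      hC _ _ _ hp hq (inv_mul_cancel_left _ _)
    have e2 : θ g = d x⁻¹ (x * (b * g)⁻¹ * b) + d 1 1 + d g⁻¹ g := by
      refine hC _ _ _ hp hqb ?_
      group
    have c1 : d x⁻¹ (x * (b * g)⁻¹ * b) = d x⁻¹ (x * (b * g)⁻¹) + d (b * g)⁻¹ b := by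
      have h := hd x⁻¹ (x * (b * g)⁻¹) b
      rw [inv_mul_cancel_left, h0 _ _ hq hbB hqb, add_zero] at h
      exact h.symm
    have c2 : d (b * g)⁻¹ b + d g⁻¹ g = d (b * g)⁻¹ (b * g) + d b g := by
      have h := hd (b * g)⁻¹ b g
      rw [mul_inv_rev, inv_mul_cancel_right, ← mul_inv_rev] at h
      exact h
    have : d (b * g)⁻¹ b = d (b * g)⁻¹ (b * g) + d b g - d g⁻¹ g :=
      eq_sub_of_add_eq c2
    rw [e1, e2, c1, this]; abel
  -- the cocycle equation for θ
  have hQ : ∀ g h : G, θ g + θ h = θ (g * h) + d g h := by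
    intro g h
    obtain ⟨x, hx⟩ := hB g g g
    obtain ⟨⟨⟨hx1, hx2⟩, -⟩, -⟩ := hx
    have hxi : x⁻¹ ∈ B := hinv hx1
    have hbB : x * g⁻¹ ∈ B := hmem hx2
    have hbg : x * g⁻¹ * g = x := inv_mul_cancel_right _ _
    have e1 : θ x = θ g - d (x * g⁻¹) g := by
      have := hS (x * g⁻¹) g hbB
      rwa [hbg] at this
    have e2 : θ (x * h) = θ (g * h) - d (x * g⁻¹) (g * h) := by
      have := hS (x * g⁻¹) (g * h) hbB
      rwa [← mul_assoc, hbg] at this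
    have e3 : θ h = θ (x * h) - d x⁻¹ (x * h) := by
      have := hS x⁻¹ (x * h) hxi
      rwa [inv_mul_cancel_left] at this
    have e4 : θ x = d 1 1 + d x⁻¹ x := hD x hxi
    have c1 : d (x * g⁻¹) g + d x h = d (x * g⁻¹) (g * h) + d g h := by
      have := hd (x * g⁻¹) g h
      rwa [hbg] at this
    have c2 : d x⁻¹ x + d 1 1 = d x⁻¹ (x * h) + d x h := by
      have := hd x⁻¹ x h
      rwa [inv_mul_cancel, h1g h] at this
    have s1 : d (x * g⁻¹) (g * h) = d (x * g⁻¹) g + d x h - d g h := eq_sub_of_add_eq c1.symm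
    have s2 : d x⁻¹ (x * h) = d x⁻¹ x + d 1 1 - d x h := (eq_sub_of_add_eq c2.symm)
    have e1' : θ g = d 1 1 + d x⁻¹ x + d (x * g⁻¹) g := by
      rw [← e4, e1]; abel
    rw [e1', e3, e2, s1, s2]; abel
  refine ⟨θ, ⟨hV, hQ⟩, ?_⟩
  -- uniqueness
  intro θ' ⟨hV', hQ'⟩
  funext g
  obtain ⟨x, hx⟩ := hB g g g
  obtain ⟨⟨⟨hx1, hx2⟩, -⟩, -⟩ := hx
  have hxi : x⁻¹ ∈ B := hinv hx1
  have hbB : x * g⁻¹ ∈ B := hmem hx2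
  have hbg : x * g⁻¹ * g = x := inv_mul_cancel_right _ _
  have h1 : θ' 1 = d 1 1 := by
    have h := hQ' 1 1
    rw [one_mul] at h
    exact add_left_cancel h
  have h2 : θ' g = θ' x + d (x * g⁻¹) g := by
    have h := hQ' (x * g⁻¹) g
    rw [hbg, hV' _ hbB, zero_add] at h
    exact h
  have h3 : θ' x = d 1 1 + d x x⁻¹ := by
    have h := hQ' x x⁻¹
    rw [mul_inv_cancel, hV' _ hxi, add_zero, h1] at h
    exact h
  have h4 : θ g = d x⁻¹ (x * g⁻¹) + d 1 1 + d g⁻¹ g :=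
    hC g x⁻¹ (x * g⁻¹) hxi hbB (inv_mul_cancel_left _ _)
  have c3 : d x⁻¹ (x * g⁻¹) + d g⁻¹ g = d x⁻¹ x + d (x * g⁻¹) g := by
    have h := hd x⁻¹ (x * g⁻¹) g
    rwa [inv_mul_cancel_left, hbg] at h
  have : d x⁻¹ (x * g⁻¹) = d x⁻¹ x + d (x * g⁻¹) g - d g⁻¹ g := eq_sub_of_add_eq c3
  rw [h2, h3, h4, this, hsym]; abel

/-- Lemma `big-lem`(ii) of the paper: two 2-cocycles agreeing on a big subset `B`
(whenever the product stays in `B`) differ by a unique coboundary vanishing on `B`;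
equivalently, the corresponding central extensions of `G` by `Z` are isomorphic by a
unique isomorphism identical on `Z` and matching the canonical sections over `B`. -/
theorem cocycles_agreeing_on_big_subset {G : Type*} [Group G] {Z : Type*} [AddCommGroup Z]
    (c c' : G → G → Z)
    (hc : ∀ g₁ g₂ g₃ : G, c g₁ g₂ + c (g₁ * g₂) g₃ = c g₁ (g₂ * g₃) + c g₂ g₃)
    (hc' : ∀ g₁ g₂ g₃ : G, c' g₁ g₂ + c' (g₁ * g₂) g₃ = c' g₁ (g₂ * g₃) + c' g₂ g₃)
    (B : Set G) (hB : IsBig B)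
    (hagree : ∀ b₁ b₂ : G, b₁ ∈ B → b₂ ∈ B → b₁ * b₂ ∈ B → c b₁ b₂ = c' b₁ b₂) :
    ∃! θ : G → Z, (∀ b ∈ B, θ b = 0) ∧
      ∀ g₁ g₂ : G, θ g₁ + θ g₂ + c' g₁ g₂ = θ (g₁ * g₂) + c g₁ g₂ := by
  obtain ⟨θ, ⟨hv, hr⟩, hu⟩ := bigaux (fun g₁ g₂ => c g₁ g₂ - c' g₁ g₂)
    (by
      intro g₁ g₂ g₃
      beta_reduce
      rw [sub_add_sub_comm, sub_add_sub_comm, hc, hc'])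
    B hB
    (by
      intro b₁ b₂ hb₁ hb₂ hb
      beta_reduce
      rw [sub_eq_zero]
      exact hagree b₁ b₂ hb₁ hb₂ hb)
  refine ⟨θ, ⟨hv, fun g₁ g₂ => ?_⟩, fun θ' ⟨hv', hr'⟩ => ?_⟩
  · rw [hr g₁ g₂]; abel
  · refine hu θ' ⟨hv', fun g₁ g₂ => ?_⟩
    have h := hr' g₁ g₂
    calc θ' g₁ + θ' g₂ = θ' g₁ + θ' g₂ + c' g₁ g₂ - c' g₁ g₂ := by abel
      _ = θ' (g₁ * g₂) + c g₁ g₂ - c' g₁ g₂ := by rw [h]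
      _ = θ' (g₁ * g₂) + (c g₁ g₂ - c' g₁ g₂) := by abel
end

section
/- Let g ≥ 1 and let z₁, …, z_g ∈ ℂ be purely imaginary and nonzero, i.e. Re(z_j) = 0 and Im(z_j) ≠ 0 for all j. Let m be the number of indices j with Im(z_j) > 0. Define f : ℝ → ℝ by f(t) = Σ_{j=1}^{g} arg(t − z_j), where arg denotes the principal argument (note each summand is well defined and continuous in t, since t − z_j has nonzero imaginary part). Then for all real numbers t₁, t₂ with 0 ≤ t₁ < t₂ one has the strict inequalities f(t₁) − (g − m)·π/2 < f(t₂) < f(t₁) + m·π/2. -/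
open Complex

/-- For fixed `b < 0`, `t ↦ arg (t + b*I)` is strictly increasing on `[0, ∞)`. -/
lemma arg_strictMono_neg (b : ℝ) (hb : b < 0) (t₁ t₂ : ℝ) (h0 : 0 ≤ t₁) (h : t₁ < t₂) :
    Complex.arg (t₁ + b * I) < Complex.arg (t₂ + b * I) := by
  have hre₁ : (0:ℝ) ≤ ((t₁ : ℂ) + b * I).re := by simp [h0]
  have hre₂ : (0:ℝ) ≤ ((t₂ : ℂ) + b * I).re := by simp; linarith
  have him₁ : ((t₁ : ℂ) + b * I).im = b := by simp
  have him₂ : ((t₂ : ℂ) + b * I).im = b := by simp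
  have hne₁ : ((t₁ : ℂ) + b * I) ≠ 0 := fun h => by
    have := congrArg Complex.im h; simp at this; exact hb.ne this
  have hne₂ : ((t₂ : ℂ) + b * I) ≠ 0 := fun h => by
    have := congrArg Complex.im h; simp at this; exact hb.ne this
  have ha₁ : 0 < ‖((t₁ : ℂ) + b * I)‖ := norm_pos_iff.mpr hne₁
  have ha₂ : 0 < ‖((t₂ : ℂ) + b * I)‖ := norm_pos_iff.mpr hne₂
  have hb₁ : |b| ≤ ‖((t₁ : ℂ) + b * I)‖ := by
    have := Complex.abs_im_le_norm ((t₁ : ℂ) + b * I); rwa [him₁] at this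
  have hb₂ : |b| ≤ ‖((t₂ : ℂ) + b * I)‖ := by
    have := Complex.abs_im_le_norm ((t₂ : ℂ) + b * I); rwa [him₂] at this
  have habs : ‖((t₁ : ℂ) + b * I)‖ < ‖((t₂ : ℂ) + b * I)‖ := by
    have h1 : (‖((t₁ : ℂ) + b * I)‖)^2 < (‖((t₂ : ℂ) + b * I)‖)^2 := by
      rw [Complex.sq_norm, Complex.sq_norm, Complex.normSq_apply, Complex.normSq_apply]
      simp only [Complex.add_re, Complex.add_im, Complex.ofReal_re, Complex.ofReal_im,
        Complex.mul_re, Complex.mul_im, Complex.I_re, Complex.I_im]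
      ring_nf
      nlinarith
    exact lt_of_pow_lt_pow_left₀ 2 ha₂.le h1
  have mem : ∀ a : ℝ, 0 < a → |b| ≤ a → b / a ∈ Set.Icc (-1:ℝ) 1 := by
    intro a ha hab
    have : |b / a| ≤ 1 := by
      rw [abs_div, abs_of_pos ha]; exact (div_le_one ha).mpr hab
    exact abs_le.mp this
  rw [Complex.arg_of_re_nonneg hre₁, Complex.arg_of_re_nonneg hre₂, him₁, him₂]
  have hx : b / ‖((t₁ : ℂ) + b * I)‖ < b / ‖((t₂ : ℂ) + b * I)‖ := by
    rw [div_lt_div_iff₀ ha₁ ha₂]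
    nlinarith
  exact Real.strictMonoOn_arcsin (mem _ ha₁ hb₁) (mem _ ha₂ hb₂) hx


/-- Per-term bounds for the change of `arg (t - z)`. -/
lemma arg_term_bounds (z : ℂ) (hre : z.re = 0) (him : z.im ≠ 0) (t₁ t₂ : ℝ)
    (h0 : 0 ≤ t₁) (h : t₁ < t₂) :
    (0 < z.im → Complex.arg ((t₂:ℂ) - z) - Complex.arg ((t₁:ℂ) - z) ∈
        Set.Ioo 0 (Real.pi/2)) ∧
    (z.im < 0 → Complex.arg ((t₂:ℂ) - z) - Complex.arg ((t₁:ℂ) - z) ∈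
        Set.Ioo (-(Real.pi/2)) 0) := by
  have hw : ∀ t : ℝ, (t:ℂ) - z = (t:ℂ) + (-(z.im)) * I := by
    intro t; apply Complex.ext <;> simp [hre]
  have hwre : ∀ t : ℝ, 0 ≤ t → 0 ≤ ((t:ℂ) - z).re := by
    intro t htt; simp [hre, htt]
  have hwim : ∀ t : ℝ, ((t:ℂ) - z).im = -(z.im) := by intro t; simp
  constructor
  · intro hpos
    have hmono := arg_strictMono_neg (-(z.im)) (by linarith) t₁ t₂ h0 h
    push_cast at hmono
    rw [← hw, ← hw] at hmono
    refine Set.mem_Ioo.mpr ⟨by linarith, ?_⟩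
    have h1 : Complex.arg ((t₂:ℂ) - z) < 0 :=
      Complex.arg_neg_iff.mpr (by rw [hwim]; linarith)
    have h2 : -(Real.pi/2) ≤ Complex.arg ((t₁:ℂ) - z) :=
      Complex.neg_pi_div_two_le_arg_iff.mpr (Or.inl (hwre t₁ h0))
    linarith
  · intro hneg
    have hmono := arg_strictMono_neg (z.im) hneg t₁ t₂ h0 h
    have hconj : ∀ t : ℝ, Complex.arg ((t:ℂ) - z) = -Complex.arg ((t:ℂ) + (z.im) * I) := by
      intro t
      have hc : (starRingEnd ℂ) ((t:ℂ) + (z.im) * I) = (t:ℂ) - z := by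
        apply Complex.ext <;> simp [hre]
      have hnp : Complex.arg ((t:ℂ) + (z.im) * I) ≠ Real.pi := by
        intro hp
        have := (Complex.arg_eq_pi_iff.mp hp).2
        simp at this
        exact him this
      rw [← hc, Complex.arg_conj, if_neg hnp]
    have hlt : Complex.arg ((t₂:ℂ) - z) < Complex.arg ((t₁:ℂ) - z) := by
      rw [hconj t₁, hconj t₂]; linarith
    have h1 : 0 < Complex.arg ((t₂:ℂ) - z) := by
      have h0' : (0:ℝ) ≤ Complex.arg ((t₂:ℂ) - z) :=
        Complex.arg_nonneg_iff.mpr (by rw [hwim]; linarith)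
      rcases h0'.lt_or_eq with h' | h'
      · exact h'
      · exfalso
        have := (Complex.arg_eq_zero_iff.mp h'.symm).2
        rw [hwim] at this; exact him (by linarith)
    have h2 : Complex.arg ((t₁:ℂ) - z) ≤ Real.pi/2 :=
      Complex.arg_le_pi_div_two_iff.mpr (Or.inl (hwre t₁ h0))
    exact Set.mem_Ioo.mpr ⟨by linarith, by linarith⟩

/-- The analytic core of Lemma `Arg-ineq-lem`(i): if `z₁, …, z_g` are nonzero purely
imaginary complex numbers, `m` of which lie in the upper half-plane, then the function
`f(t) = Σⱼ arg(t − zⱼ)` satisfies `f(t₁) − (g−m)π/2 < f(t₂) < f(t₁) + mπ/2` for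
`0 ≤ t₁ < t₂`. -/
theorem sum_arg_bounds (g : ℕ) (hg : 1 ≤ g) (z : Fin g → ℂ)
    (hre : ∀ j, (z j).re = 0) (him : ∀ j, (z j).im ≠ 0)
    (m : ℕ) (hm : m = (Finset.univ.filter fun j => 0 < (z j).im).card)
    (f : ℝ → ℝ) (hf : ∀ t : ℝ, f t = ∑ j, Complex.arg ((t : ℂ) - z j))
    (t₁ t₂ : ℝ) (ht₁ : 0 ≤ t₁) (ht : t₁ < t₂) :
    f t₁ - ((g : ℝ) - (m : ℝ)) * (Real.pi / 2) < f t₂ ∧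
      f t₂ < f t₁ + (m : ℝ) * (Real.pi / 2) := by
  have hπ := Real.pi_pos
  set d : Fin g → ℝ := fun j =>
    Complex.arg ((t₂:ℂ) - z j) - Complex.arg ((t₁:ℂ) - z j) with hd
  have hsum : f t₂ - f t₁ = ∑ j, d j := by
    rw [hf t₁, hf t₂, ← Finset.sum_sub_distrib]
  have hne : (Finset.univ : Finset (Fin g)).Nonempty := ⟨⟨0, hg⟩, Finset.mem_univ _⟩
  have hkey : ∀ j, (0 < (z j).im → d j ∈ Set.Ioo 0 (Real.pi/2)) ∧
      ((z j).im < 0 → d j ∈ Set.Ioo (-(Real.pi/2)) 0) := fun j =>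
    arg_term_bounds (z j) (hre j) (him j) t₁ t₂ ht₁ ht
  have hcards : (Finset.univ.filter fun j => 0 < (z j).im).card +
      (Finset.univ.filter fun j => ¬ 0 < (z j).im).card = g := by
    rw [Finset.card_filter_add_card_filter_not, Finset.card_univ, Fintype.card_fin]
  have hmg : m ≤ g := by omega
  have hU : ∑ j, d j < ∑ j, (if 0 < (z j).im then Real.pi/2 else 0) := by
    apply Finset.sum_lt_sum_of_nonempty hne
    intro j _
    by_cases hj : 0 < (z j).im
    · rw [if_pos hj]; exact ((hkey j).1 hj).2
    · rw [if_neg hj]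
      exact ((hkey j).2 (lt_of_le_of_ne (not_lt.mp hj) (him j))).2
  have hL : ∑ j, (if 0 < (z j).im then (0:ℝ) else -(Real.pi/2)) < ∑ j, d j := by
    apply Finset.sum_lt_sum_of_nonempty hne
    intro j _
    by_cases hj : 0 < (z j).im
    · rw [if_pos hj]; exact ((hkey j).1 hj).1
    · rw [if_neg hj]
      exact ((hkey j).2 (lt_of_le_of_ne (not_lt.mp hj) (him j))).1
  have hUval : ∑ j, (if 0 < (z j).im then Real.pi/2 else 0) = (m:ℝ) * (Real.pi/2) := by
    rw [Finset.sum_ite, Finset.sum_const, Finset.sum_const, ← hm]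
    simp [nsmul_eq_mul]
  have hLval : ∑ j, (if 0 < (z j).im then (0:ℝ) else -(Real.pi/2)) =
      -(((g:ℝ) - (m:ℝ)) * (Real.pi/2)) := by
    rw [Finset.sum_ite, Finset.sum_const, Finset.sum_const]
    have hc : (Finset.univ.filter fun j => ¬ 0 < (z j).im).card = g - m := by omega
    rw [hc]
    have : ((g - m : ℕ) : ℝ) = (g:ℝ) - (m:ℝ) := by
      push_cast [Nat.cast_sub hmg]; ring
    simp [nsmul_eq_mul, this]
  constructor
  · rw [hUval] at hU
    linarith [hsum ▸ hU]
  · rw [hUval] at hU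
    linarith [hsum ▸ hU]
end

section
/- Let F be a totally real number field with ring of integers R, and let I ⊆ R be a nonzero ideal. Then the action of SL₂(R) on surjective R-module homomorphisms R² → I is transitive: if f, g : R² → R are R-linear maps whose images are both equal to I, then there exists a matrix γ ∈ SL₂(R) (a 2×2 matrix over R of determinant 1) such that f = g ∘ γ, where γ acts on R² by matrix-vector multiplication. -/
open NumberField

private lemma lin_eval {R : Type*} [CommRing R] (h : (Fin 2 → R) →ₗ[R] R) (v : Fin 2 → R) :
    h v = v 0 * h (Pi.single 0 1) + v 1 * h (Pi.single 1 1) := by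
  have hv : v = v 0 • (Pi.single 0 1 : Fin 2 → R) + v 1 • (Pi.single 1 1 : Fin 2 → R) := by
    funext i; fin_cases i <;> simp
  conv_lhs => rw [hv]
  simp [smul_eq_mul]

/-- Lemma `ideal-class-lem` of the paper: if `R` is the ring of integers of a totally real
number field and `I ⊆ R` is a nonzero ideal, then `SL₂(R)` acts transitively on surjective
`R`-module homomorphisms `R² → I`. -/
theorem SL2_transitive_on_surjections_onto_ideal
    (K : Type*) [Field K] [NumberField K]
    (htotallyReal : ∀ φ : K →+* ℂ, ∀ x : K, (φ x).im = 0)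
    (I : Ideal (𝓞 K)) (hI : I ≠ ⊥)
    (f g : (Fin 2 → 𝓞 K) →ₗ[𝓞 K] 𝓞 K)
    (hf : LinearMap.range f = I) (hg : LinearMap.range g = I) :
    ∃ γ : Matrix.SpecialLinearGroup (Fin 2) (𝓞 K),
      f = g.comp ((γ : Matrix (Fin 2) (Fin 2) (𝓞 K)).mulVecLin) := by
  set R := 𝓞 K
  set a := f (Pi.single 0 1) with ha_def
  set b := f (Pi.single 1 1) with hb_def
  set c := g (Pi.single 0 1) with hc_def
  set d := g (Pi.single 1 1) with hd_def
  have hfv : ∀ v, f v = v 0 * a + v 1 * b := fun v => lin_eval f v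
  have hgv : ∀ v, g v = v 0 * c + v 1 * d := fun v => lin_eval g v
  have haI : a ∈ I := hf ▸ LinearMap.mem_range_self f (Pi.single 0 1)
  have hbI : b ∈ I := hf ▸ LinearMap.mem_range_self f (Pi.single 1 1)
  have hcI : c ∈ I := hg ▸ LinearMap.mem_range_self g (Pi.single 0 1)
  have hdI : d ∈ I := hg ▸ LinearMap.mem_range_self g (Pi.single 1 1)
  -- `I` is generated by `a` and `b`
  have hIab : I = Ideal.span {a, b} := by
    apply le_antisymm
    · intro x hx
      rw [← hf] at hx
      obtain ⟨v, rfl⟩ := hx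
      exact Ideal.mem_span_pair.mpr ⟨v 0, v 1, (hfv v).symm⟩
    · rw [Ideal.span_le]
      rintro x (rfl | rfl)
      exacts [haI, hbI]
  -- pass to fractional ideals to find `s t : K` in `J⁻¹` with `s*a + t*b = 1`
  set φ : R →+* K := algebraMap R K with hφ
  have inj : Function.Injective φ := IsFractionRing.injective R K
  set J : FractionalIdeal (nonZeroDivisors R) K := ↑I with hJ_def
  have hJ0 : J ≠ 0 := FractionalIdeal.coeIdeal_ne_zero.mpr hI
  have hJJ : J * J⁻¹ = 1 := mul_inv_cancel₀ hJ0
  have hJab : J = FractionalIdeal.spanSingleton (nonZeroDivisors R) (φ a) + FractionalIdeal.spanSingleton (nonZeroDivisors R) (φ b) := by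
    rw [hJ_def, hIab]
    rw [show ({a, b} : Set R) = insert a {b} from rfl, Ideal.span_insert,
      FractionalIdeal.coeIdeal_sup, FractionalIdeal.coeIdeal_span_singleton,
      FractionalIdeal.coeIdeal_span_singleton]
  have hone : (1 : K) ∈ FractionalIdeal.spanSingleton (nonZeroDivisors R) (φ a) * J⁻¹
      + FractionalIdeal.spanSingleton (nonZeroDivisors R) (φ b) * J⁻¹ := by
    rw [← add_mul, ← hJab, hJJ]
    exact FractionalIdeal.one_mem_one _
  obtain ⟨u, hu, w, hw, huw⟩ := (FractionalIdeal.mem_add _ _ _).mp hone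
  obtain ⟨s, hs, rfl⟩ := FractionalIdeal.mem_singleton_mul.mp hu
  obtain ⟨t, ht, rfl⟩ := FractionalIdeal.mem_singleton_mul.mp hw
  have hst : φ a * s + φ b * t = 1 := huw
  -- multiples of `s` and `t` by elements of `I` are integral
  have key : ∀ x : K, x ∈ J⁻¹ → ∀ z : R, z ∈ I → ∃ y : R, φ y = x * φ z := by
    intro x hx z hz
    have := (FractionalIdeal.mem_inv_iff hJ0).mp hx (φ z)
      ((FractionalIdeal.mem_coeIdeal _).mpr ⟨z, hz, rfl⟩)
    exact (FractionalIdeal.mem_one_iff _).mp this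
  obtain ⟨sc, hsc⟩ := key s hs c hcI
  obtain ⟨sd, hsd⟩ := key s hs d hdI
  obtain ⟨tc, htc⟩ := key t ht c hcI
  obtain ⟨td, htd⟩ := key t ht d hdI
  -- a particular solution: `a` and `b` in terms of `c` and `d`
  obtain ⟨v, hv⟩ := (hg ▸ haI : a ∈ LinearMap.range g)
  obtain ⟨w', hw'⟩ := (hg ▸ hbI : b ∈ LinearMap.range g)
  set p0 := v 0 with hp0_def
  set r0 := v 1 with hr0_def
  set q0 := w' 0 with hq0_def
  set s0 := w' 1 with hs0_def
  have hp0 : p0 * c + r0 * d = a := by rw [← hv, hgv]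
  have hq0 : q0 * c + s0 * d = b := by rw [← hw', hgv]
  set e : R := 1 - (p0 * s0 - q0 * r0) with he
  -- the corrected matrix entries
  set P := p0 + e * td with hP
  set Q := q0 - e * sd with hQ
  set Rr := r0 - e * tc with hRr
  set S := s0 + e * sc with hS
  have hp0K : φ p0 * φ c + φ r0 * φ d = φ a := by rw [← map_mul, ← map_mul, ← map_add, hp0]
  have hq0K : φ q0 * φ c + φ s0 * φ d = φ b := by rw [← map_mul, ← map_mul, ← map_add, hq0]
  have hA : c * P + d * Rr = a := by
    apply inj
    simp only [hP, hRr, he, map_add, map_sub, map_mul, map_one]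
    linear_combination hp0K + (1 - (φ p0 * φ s0 - φ q0 * φ r0)) * φ c * htd
      - (1 - (φ p0 * φ s0 - φ q0 * φ r0)) * φ d * htc
  have hB : c * Q + d * S = b := by
    apply inj
    simp only [hP, hQ, hS, he, map_add, map_sub, map_mul, map_one]
    linear_combination hq0K - (1 - (φ p0 * φ s0 - φ q0 * φ r0)) * φ c * hsd
      + (1 - (φ p0 * φ s0 - φ q0 * φ r0)) * φ d * hsc
  have hC : P * S - Q * Rr = 1 := by
    apply inj
    simp only [hP, hQ, hRr, hS, he, map_add, map_sub, map_mul, map_one]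
    rw [htd, htc, hsd, hsc]
    linear_combination (1 - (φ p0 * φ s0 - φ q0 * φ r0)) * s * hp0K
      + (1 - (φ p0 * φ s0 - φ q0 * φ r0)) * t * hq0K
      + (1 - (φ p0 * φ s0 - φ q0 * φ r0)) * hst
  refine ⟨⟨!![P, Q; Rr, S], by simpa [Matrix.det_fin_two_of] using hC⟩, ?_⟩
  apply LinearMap.ext
  intro v'
  rw [hfv]
  simp only [LinearMap.comp_apply, Matrix.mulVecLin_apply]
  have hmv : (!![P, Q; Rr, S]).mulVec v' = ![P * v' 0 + Q * v' 1, Rr * v' 0 + S * v' 1] := by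
    funext i
    fin_cases i <;> simp [Matrix.mulVec, dotProduct, Fin.sum_univ_two]
  rw [hmv, hgv]
  simp only [Matrix.cons_val_zero, Matrix.cons_val_one, Matrix.head_cons]
  linear_combination (-(v' 0)) * hA - v' 1 * hB
end

section
/- Let F be a totally real number field with ring of integers R. Let a, b, a', b' ∈ R with (a, b) ≠ (0, 0) and (a', b') ≠ (0, 0). Then the following are equivalent: (1) there exist γ ∈ SL₂(R) and a nonzero c ∈ F such that, in F², γ·(a, b)ᵀ = (c·a', c·b')ᵀ (i.e., the points (a : b) and (a' : b') of the projective line ℙ¹(F) lie in the same SL₂(R)-orbit); (2) the nonzero ideals aR + bR and a'R + b'R of R define the same class in the ideal class group of R. -/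
open NumberField

open scoped nonZeroDivisors

private lemma span_pair_map_mulLeft (K : Type*) [Field K] [NumberField K] (c u v : K) :
    Submodule.map (LinearMap.mulLeft (𝓞 K) c) (Submodule.span (𝓞 K) {u, v}) =
      Submodule.span (𝓞 K) {c * u, c * v} := by
  rw [Submodule.map_span, Set.image_pair]
  rfl

private lemma exists_SL2_of_span_eq (K : Type*) [Field K] [NumberField K]
    {x y u v : K}
    (hspan : Submodule.span (𝓞 K) {x, y} = Submodule.span (𝓞 K) {u, v})
    (hne : Submodule.span (𝓞 K) ({x, y} : Set K) ≠ ⊥) :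
    ∃ γ : Matrix.SpecialLinearGroup (Fin 2) (𝓞 K),
      ((γ : Matrix (Fin 2) (Fin 2) (𝓞 K)).map (algebraMap (𝓞 K) K)).mulVec ![x, y] = ![u, v] := by
  classical
  set Jf : FractionalIdeal (𝓞 K)⁰ K :=
    FractionalIdeal.spanSingleton _ x + FractionalIdeal.spanSingleton _ y with hJf
  have coeJ : (Jf : Submodule (𝓞 K) K) = Submodule.span (𝓞 K) {x, y} := by
    rw [hJf, FractionalIdeal.coe_add, FractionalIdeal.coe_spanSingleton,
      FractionalIdeal.coe_spanSingleton, Submodule.add_eq_sup, Submodule.span_insert]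
  have hJ0 : Jf ≠ 0 := by
    intro h
    apply hne
    rw [← coeJ, h, FractionalIdeal.coe_zero]
  have hmul : Jf⁻¹ * Jf = 1 := inv_mul_cancel₀ hJ0
  -- key : generators of J pair with elements of J⁻¹ to give 1
  have key : ∀ u' v' : K, Submodule.span (𝓞 K) {u', v'} = (Jf : Submodule (𝓞 K) K) →
      ∃ p q : K, p ∈ Jf⁻¹ ∧ q ∈ Jf⁻¹ ∧ p * u' + q * v' = 1 := by
    intro u' v' hsp
    have h1 : (1 : K) ∈ Jf⁻¹ * Jf := by rw [hmul]; exact FractionalIdeal.one_mem_one _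
    rw [← FractionalIdeal.mem_coe, FractionalIdeal.coe_mul] at h1
    refine Submodule.mul_induction_on h1 ?_ ?_
    · intro m hm n hn
      rw [← hsp] at hn
      obtain ⟨r, s, hrs⟩ := Submodule.mem_span_pair.mp hn
      refine ⟨r • m, s • m, Submodule.smul_mem _ _ hm, Submodule.smul_mem _ _ hm, ?_⟩
      rw [← hrs]
      simp only [Algebra.smul_def]
      ring
    · rintro z w ⟨p₁, q₁, hp₁, hq₁, h₁⟩ ⟨p₂, q₂, hp₂, hq₂, h₂⟩
      exact ⟨p₁ + p₂, q₁ + q₂, Submodule.add_mem _ hp₁ hp₂, Submodule.add_mem _ hq₁ hq₂,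
        by linear_combination h₁ + h₂⟩
  obtain ⟨p, q, hp, hq, hpq⟩ := key x y coeJ.symm
  obtain ⟨p', q', hp', hq', hpq'⟩ := key u v (hspan ▸ coeJ.symm)
  -- products of elements of J⁻¹ and J are integral
  have hmem : ∀ w : K, w ∈ Jf⁻¹ → ∀ z : K, z ∈ (Jf : Submodule (𝓞 K) K) →
      ∃ r : 𝓞 K, algebraMap (𝓞 K) K r = w * z := by
    intro w hw z hz
    have : w * z ∈ Jf⁻¹ * Jf := FractionalIdeal.mul_mem_mul hw (FractionalIdeal.mem_coe.mp hz)
    rw [hmul] at this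
    exact (FractionalIdeal.mem_one_iff _).mp this
  have hx : x ∈ (Jf : Submodule (𝓞 K) K) := by
    rw [coeJ]; exact Submodule.subset_span (by simp)
  have hy : y ∈ (Jf : Submodule (𝓞 K) K) := by
    rw [coeJ]; exact Submodule.subset_span (by simp)
  have hu : u ∈ (Jf : Submodule (𝓞 K) K) := by
    rw [coeJ, hspan]; exact Submodule.subset_span (by simp)
  have hv : v ∈ (Jf : Submodule (𝓞 K) K) := by
    rw [coeJ, hspan]; exact Submodule.subset_span (by simp)
  obtain ⟨r₁, hr₁⟩ := hmem p hp u hu      -- p * u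
  obtain ⟨r₂, hr₂⟩ := hmem q' hq' y hy    -- q' * y
  obtain ⟨r₃, hr₃⟩ := hmem q hq u hu      -- q * u
  obtain ⟨r₄, hr₄⟩ := hmem q' hq' x hx    -- q' * x
  obtain ⟨r₅, hr₅⟩ := hmem p hp v hv      -- p * v
  obtain ⟨r₆, hr₆⟩ := hmem p' hp' y hy    -- p' * y
  obtain ⟨r₇, hr₇⟩ := hmem q hq v hv      -- q * v
  obtain ⟨r₈, hr₈⟩ := hmem p' hp' x hx    -- p' * x
  set γR : Matrix (Fin 2) (Fin 2) (𝓞 K) := !![r₁ + r₂, r₃ - r₄; r₅ - r₆, r₇ + r₈] with hγR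
  have hdet : γR.det = 1 := by
    apply IsFractionRing.injective (𝓞 K) K
    rw [map_one, hγR, Matrix.det_fin_two_of]
    simp only [map_sub, map_add, map_mul]
    rw [hr₁, hr₂, hr₃, hr₄, hr₅, hr₆, hr₇, hr₈]
    linear_combination (p' * u + q' * v) * hpq + hpq'
  refine ⟨⟨γR, hdet⟩, ?_⟩
  funext i
  fin_cases i <;>
    simp only [hγR, Matrix.SpecialLinearGroup.coe_mk, Matrix.map_apply, Matrix.mulVec,
      dotProduct, Fin.sum_univ_two, Fin.mk_zero, Fin.mk_one, Fin.isValue,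
      Matrix.of_apply, Matrix.cons_val', Matrix.cons_val_zero, Matrix.cons_val_one, Matrix.head_cons,
      Matrix.head_fin_const, Matrix.empty_val', Matrix.cons_val_fin_one,
      map_add, map_sub]
  · rw [hr₁, hr₂, hr₃, hr₄]; linear_combination u * hpq
  · rw [hr₅, hr₆, hr₇, hr₈]; linear_combination v * hpq

/-- From the proof of Proposition `class-prop`: for the ring of integers `R` of a totally
real number field `F`, two points `(a : b)` and `(a' : b')` of `ℙ¹(F)` lie in the same
`SL₂(R)`-orbit if and only if the ideals `aR + bR` and `a'R + b'R` define the same class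
in the ideal class group of `R`. -/
theorem SL2_orbit_iff_same_ideal_class
    (K : Type*) [Field K] [NumberField K]
    (htotallyReal : ∀ φ : K →+* ℂ, ∀ x : K, (φ x).im = 0)
    (a b a' b' : 𝓞 K) (hab : (a, b) ≠ (0, 0)) (hab' : (a', b') ≠ (0, 0)) :
    (∃ (γ : Matrix.SpecialLinearGroup (Fin 2) (𝓞 K)) (c : K), c ≠ 0 ∧
        ((γ : Matrix (Fin 2) (Fin 2) (𝓞 K)).map (algebraMap (𝓞 K) K)).mulVec
            ![algebraMap (𝓞 K) K a, algebraMap (𝓞 K) K b] =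
          c • ![algebraMap (𝓞 K) K a', algebraMap (𝓞 K) K b']) ↔
      (∃ c : K, c ≠ 0 ∧
        Submodule.span (𝓞 K) {c * algebraMap (𝓞 K) K a, c * algebraMap (𝓞 K) K b} =
          Submodule.span (𝓞 K) {algebraMap (𝓞 K) K a', algebraMap (𝓞 K) K b'}) := by
  classical
  set f := algebraMap (𝓞 K) K with hf
  constructor
  · rintro ⟨γ, c, hc, h⟩
    refine ⟨c⁻¹, inv_ne_zero hc, ?_⟩
    set δ : Matrix (Fin 2) (Fin 2) (𝓞 K) :=
      ((γ⁻¹ : Matrix.SpecialLinearGroup (Fin 2) (𝓞 K)) : Matrix (Fin 2) (Fin 2) (𝓞 K))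
      with hδ
    have hspan : Submodule.span (𝓞 K) {f a, f b} =
        Submodule.span (𝓞 K) {c * f a', c * f b'} := by
      apply le_antisymm
      · have hinv : δ.map f * ((γ : Matrix (Fin 2) (Fin 2) (𝓞 K)).map f) = 1 := by
          rw [← Matrix.map_mul]
          have h1 : δ * (γ : Matrix (Fin 2) (Fin 2) (𝓞 K)) = 1 := by
            rw [hδ, ← Matrix.SpecialLinearGroup.coe_mul, inv_mul_cancel,
              Matrix.SpecialLinearGroup.coe_one]
          rw [h1, Matrix.map_one f (map_zero f) (map_one f)]
        have hv : ![f a, f b] = (δ.map f).mulVec (c • ![f a', f b']) := by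
          rw [← h, Matrix.mulVec_mulVec, hinv, Matrix.one_mulVec]
        rw [Submodule.span_le]
        rintro z (rfl | rfl)
        · have h0 := congrFun hv 0
          simp only [Matrix.cons_val_zero, Matrix.mulVec, dotProduct,
            Fin.sum_univ_two, Matrix.map_apply, Pi.smul_apply, Matrix.cons_val_one,
            Matrix.head_cons, smul_eq_mul, Fin.isValue] at h0
          rw [SetLike.mem_coe, h0]
          exact Submodule.mem_span_pair.mpr ⟨δ 0 0, δ 0 1, by
            rw [Algebra.smul_def, Algebra.smul_def]⟩
        · have h1 := congrFun hv 1
          simp only [Matrix.cons_val_zero, Matrix.mulVec, dotProduct,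
            Fin.sum_univ_two, Matrix.map_apply, Pi.smul_apply, Matrix.cons_val_one,
            Matrix.head_cons, smul_eq_mul, Fin.isValue] at h1
          rw [SetLike.mem_coe, h1]
          exact Submodule.mem_span_pair.mpr ⟨δ 1 0, δ 1 1, by
            rw [Algebra.smul_def, Algebra.smul_def]⟩
      · rw [Submodule.span_le]
        rintro z (rfl | rfl)
        · have h0 := congrFun h 0
          simp only [Matrix.cons_val_zero, Matrix.mulVec, dotProduct,
            Fin.sum_univ_two, Matrix.map_apply, Pi.smul_apply, Matrix.cons_val_one,
            Matrix.head_cons, smul_eq_mul, Fin.isValue] at h0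
          rw [SetLike.mem_coe, ← h0]
          exact Submodule.mem_span_pair.mpr
            ⟨(γ : Matrix (Fin 2) (Fin 2) (𝓞 K)) 0 0, (γ : Matrix (Fin 2) (Fin 2) (𝓞 K)) 0 1,
              by rw [Algebra.smul_def, Algebra.smul_def]⟩
        · have h1 := congrFun h 1
          simp only [Matrix.cons_val_zero, Matrix.mulVec, dotProduct,
            Fin.sum_univ_two, Matrix.map_apply, Pi.smul_apply, Matrix.cons_val_one,
            Matrix.head_cons, smul_eq_mul, Fin.isValue] at h1
          rw [SetLike.mem_coe, ← h1]
          exact Submodule.mem_span_pair.mpr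
            ⟨(γ : Matrix (Fin 2) (Fin 2) (𝓞 K)) 1 0, (γ : Matrix (Fin 2) (Fin 2) (𝓞 K)) 1 1,
              by rw [Algebra.smul_def, Algebra.smul_def]⟩
    calc Submodule.span (𝓞 K) {c⁻¹ * f a, c⁻¹ * f b}
        = Submodule.map (LinearMap.mulLeft (𝓞 K) c⁻¹)
            (Submodule.span (𝓞 K) {f a, f b}) := (span_pair_map_mulLeft K _ _ _).symm
      _ = Submodule.map (LinearMap.mulLeft (𝓞 K) c⁻¹)
            (Submodule.span (𝓞 K) {c * f a', c * f b'}) := by rw [hspan]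
      _ = Submodule.span (𝓞 K) {c⁻¹ * (c * f a'), c⁻¹ * (c * f b')} :=
            span_pair_map_mulLeft K _ _ _
      _ = Submodule.span (𝓞 K) {f a', f b'} := by
            rw [inv_mul_cancel_left₀ hc, inv_mul_cancel_left₀ hc]
  · rintro ⟨c, hc, hspan⟩
    have hne : Submodule.span (𝓞 K) ({c * f a, c * f b} : Set K) ≠ ⊥ := by
      rw [hspan]
      intro hbot
      have ha' : f a' = 0 := by
        have : f a' ∈ Submodule.span (𝓞 K) ({f a', f b'} : Set K) :=
          Submodule.subset_span (by simp)
        rw [hbot] at this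
        simpa using this
      have hb' : f b' = 0 := by
        have : f b' ∈ Submodule.span (𝓞 K) ({f a', f b'} : Set K) :=
          Submodule.subset_span (by simp)
        rw [hbot] at this
        simpa using this
      apply hab'
      have inj := IsFractionRing.injective (𝓞 K) K
      exact Prod.ext (inj (by rw [ha', map_zero])) (inj (by rw [hb', map_zero]))
    obtain ⟨γ, hγ⟩ := exists_SL2_of_span_eq K hspan hne
    refine ⟨γ, c⁻¹, inv_ne_zero hc, ?_⟩
    have h2 : (c : K) • ![f a, f b] = ![c * f a, c * f b] := by
      funext i; fin_cases i <;> simp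
    rw [← h2, Matrix.mulVec_smul] at hγ
    rw [← hγ, inv_smul_smul₀ hc]
end

section
/- Let A and B be n×n matrices with complex entries. If det(A − X) = det(B − X) for every n×n complex matrix X, then A = B. -/
/-- Two permutations agreeing off one point are equal. -/
lemma perm_eq_of_eq_off {α : Type*} [DecidableEq α] (π σ : Equiv.Perm α) (k₀ : α)
    (h : ∀ k, k ≠ k₀ → π k = σ k) : π = σ := by
  ext k
  rcases eq_or_ne k k₀ with rfl | hk
  · by_contra hne
    set m := σ.symm (π k) with hm
    have hσm : σ m = π k := by simp [hm]
    have hmk : m ≠ k := by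
      intro hmk
      rw [hmk] at hσm
      exact hne hσm.symm
    have : π m = π k := by rw [h m hmk, hσm]
    exact hmk (π.injective this)
  · exact h k hk

open Matrix in
lemma det_inj_aux (n : ℕ) (D : Matrix (Fin n) (Fin n) ℂ)
    (h : ∀ C : Matrix (Fin n) (Fin n) ℂ, (D + C).det = C.det) : D = 0 := by
  ext i j
  classical
  set σ : Equiv.Perm (Fin n) := Equiv.swap i j with hσ
  set N : Matrix (Fin n) (Fin n) ℂ :=
    Matrix.of (fun k l => if k = i then D i l else if σ k = l then 1 else 0) with hN
  -- det (N - D) = 0 since its row i vanishes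
  have hC : (N - D).det = 0 := by
    apply Matrix.det_eq_zero_of_row_eq_zero i
    intro l
    simp [hN]
  have h1 : N.det = 0 := by
    have := h (N - D)
    rw [add_sub_cancel] at this
    rw [this, hC]
  -- compute det N via the permutation sum: only σ contributes
  have h2 : N.det = (Equiv.Perm.sign σ : ℤ) * D i j := by
    rw [Matrix.det_apply]
    rw [Finset.sum_eq_single σ]
    · have hprod : ∏ k, N (σ k) k = D i j := by
        rw [Finset.prod_eq_single j]
        · have : σ j = i := Equiv.swap_apply_right i j
          simp [hN, this]
        · intro k _ hk
          have hne : σ k ≠ i := by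
            intro hki
            have : σ j = i := Equiv.swap_apply_right i j
            exact hk (σ.injective (hki.trans this.symm))
          have : σ (σ k) = k := Equiv.swap_apply_self i j k
          simp [hN, hne, this]
        · simp
      rw [hprod]
      simp [Units.smul_def, zsmul_eq_mul]
    · intro π _ hπ
      have hex : ∃ k, π k ≠ i ∧ σ (π k) ≠ k := by
        by_contra hcon
        push_neg at hcon
        apply hπ
        rcases eq_or_ne n 0 with rfl | hn0
        · exact Equiv.ext (fun k => absurd k.2 (by simp))
        have : ∃ k₀, π k₀ = i := ⟨π.symm i, by simp⟩
        obtain ⟨k₀, hk₀⟩ := this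
        apply perm_eq_of_eq_off π σ k₀
        intro k hk
        have hne : π k ≠ i := by
          intro hki
          exact hk (π.injective (hki.trans hk₀.symm))
        have := hcon k hne
        have := congrArg σ this
        rwa [Equiv.swap_apply_self] at this
      obtain ⟨k, hk1, hk2⟩ := hex
      have h0 : N (π k) k = 0 := by simp [hN, hk1, hk2]
      have hz : ∏ x, N (π x) x = 0 := Finset.prod_eq_zero (Finset.mem_univ k) h0
      rw [hz, smul_zero]
    · simp
  have hsign : ((Equiv.Perm.sign σ : ℤ) : ℂ) ≠ 0 := by
    rcases Int.units_eq_one_or (Equiv.Perm.sign σ) with h' | h' <;> simp [h']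
  have : ((Equiv.Perm.sign σ : ℤ) : ℂ) * D i j = 0 := by rw [← h2, h1]
  have := mul_eq_zero.mp this
  simp only [Matrix.zero_apply]
  tauto

/-- Proposition `deg-inj-prop` in the matrix-algebra setting: a complex `n × n` matrix `A`
is determined by the polynomial function `X ↦ det(A − X)` on all matrices. -/
theorem matrix_determined_by_det_sub
    (n : ℕ) (A B : Matrix (Fin n) (Fin n) ℂ)
    (h : ∀ X : Matrix (Fin n) (Fin n) ℂ, (A - X).det = (B - X).det) :
    A = B := by
  have hD : A - B = 0 := by
    apply det_inj_aux n (A - B)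
    intro C
    have hx := h (B - C)
    have e1 : A - (B - C) = (A - B) + C := by abel
    have e2 : B - (B - C) = C := by abel
    rw [e1, e2] at hx
    exact hx
  exact sub_eq_zero.mp hD
end

section
/- Let A and B be symmetric n×n matrices with complex entries (Aᵀ = A and Bᵀ = B). If det(A − S) = det(B − S) for every symmetric n×n complex matrix S (Sᵀ = S), then A = B. -/
open Polynomial Matrix

private lemma trace_stdBasisMatrix_mul {n : ℕ} (i j : Fin n) (M : Matrix (Fin n) (Fin n) ℂ) :
    Matrix.trace (Matrix.single i j 1 * M) = M j i := by
  classical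
  rw [Matrix.trace, Finset.sum_eq_single i]
  · simp
  · intro b _ hb
    simp [Matrix.diag, hb]
  · simp

private lemma transpose_stdBasisMatrix' {n : ℕ} (i j : Fin n) :
    (Matrix.single i j (1 : ℂ))ᵀ = Matrix.single j i 1 := by
  ext a b
  simp [Matrix.single, and_comm]

private lemma trace_eq_zero_of_det_one_add_smul {n : ℕ} (N : Matrix (Fin n) (Fin n) ℂ)
    (h : ∀ u : ℂ, (1 + u • N).det = 1) : Matrix.trace N = 0 := by
  set e := (Matrix.det (1 + (X : ℂ[X]) • N.map C)).divX.divX with he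
  have key : (C (Matrix.trace N) * X + e * X ^ 2) = 0 := by
    apply Polynomial.funext
    intro u
    have h1 := Matrix.det_one_add_smul u N
    rw [h u, ← he] at h1
    have h2 : Matrix.trace N * u + e.eval u * u ^ 2 = 0 := by linear_combination h1.symm
    simp [h2]
  have := congrArg (fun p => Polynomial.coeff p 1) key
  simpa [Polynomial.coeff_mul_X_pow'] using this

private lemma eval_charpoly' {n : ℕ} (M : Matrix (Fin n) (Fin n) ℂ) (t : ℂ) :
    M.charpoly.eval t = (t • (1 : Matrix (Fin n) (Fin n) ℂ) - M).det := by
  rw [Matrix.charpoly, ← Polynomial.coe_evalRingHom, RingHom.map_det]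
  congr 1
  ext i j
  by_cases hij : i = j
  · subst hij
    simp [Matrix.charmatrix_apply_eq]
  · simp [Matrix.charmatrix_apply_ne _ _ _ hij, Matrix.one_apply_ne hij, hij]

/-- The second assertion of Proposition `deg-inj-prop` in the matrix-algebra setting:
a symmetric complex `n × n` matrix `A` is determined by the polynomial function
`S ↦ det(A − S)` restricted to symmetric matrices. -/
theorem symm_matrix_determined_by_det_sub_symm
    (n : ℕ) (A B : Matrix (Fin n) (Fin n) ℂ)
    (hA : A.IsSymm) (hB : B.IsSymm)
    (h : ∀ S : Matrix (Fin n) (Fin n) ℂ, S.IsSymm → (A - S).det = (B - S).det) :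
    A = B := by
  set D := A - B with hDdef
  have hD : D.IsSymm := hA.sub hB
  suffices hD0 : D = 0 by
    have := sub_eq_zero.mp hD0
    exact this
  -- Step 1: det (T + D) = det T for all symmetric T
  have star : ∀ T : Matrix (Fin n) (Fin n) ℂ, T.IsSymm → (T + D).det = T.det := by
    intro T hT
    have hS : (A - (T + D)).IsSymm := hA.sub (hT.add hD)
    have := h (A - (T + D)) hS
    have e1 : A - (A - (T + D)) = T + D := by abel
    have e2 : B - (A - (T + D)) = T := by rw [hDdef]; abel
    rwa [e1, e2] at this
  -- Step 2: det (T + u • D) = det T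
  have star2 : ∀ (u : ℂ) (T : Matrix (Fin n) (Fin n) ℂ), T.IsSymm →
      (T + u • D).det = T.det := by
    intro u T hT
    rcases eq_or_ne u 0 with rfl | hu
    · simp
    · have h1 := star (u⁻¹ • T) (hT.smul u⁻¹)
      have h2 : (u • (u⁻¹ • T + D)).det = (u • (u⁻¹ • T)).det := by
        rw [Matrix.det_smul, Matrix.det_smul, h1]
      simp only [smul_add, smul_smul, mul_inv_cancel₀ hu, one_smul] at h2
      exact h2
  -- Step 3: trace (P⁻¹ * D) = 0 for invertible symmetric P
  have step3 : ∀ P : Matrix (Fin n) (Fin n) ℂ, P.IsSymm → IsUnit P.det →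
      Matrix.trace (P⁻¹ * D) = 0 := by
    intro P hP hPu
    apply trace_eq_zero_of_det_one_add_smul
    intro u
    have key : P.det * (1 + u • (P⁻¹ * D)).det = P.det * 1 := by
      rw [← Matrix.det_mul, mul_add, mul_one, Matrix.mul_smul, ← Matrix.mul_assoc,
        Matrix.mul_nonsing_inv P hPu, Matrix.one_mul, star2 u P hP, mul_one]
    exact mul_left_cancel₀ hPu.ne_zero key
  -- Step 4: trace (Q * D) = 0 for invertible symmetric Q
  have step4 : ∀ Q : Matrix (Fin n) (Fin n) ℂ, Q.IsSymm → IsUnit Q.det →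
      Matrix.trace (Q * D) = 0 := by
    intro Q hQ hQu
    have hinv : (Q⁻¹).IsSymm := by
      rw [Matrix.IsSymm, Matrix.transpose_nonsing_inv, hQ.eq]
    have hinvu : IsUnit (Q⁻¹).det := Matrix.isUnit_nonsing_inv_det Q hQu
    have := step3 Q⁻¹ hinv hinvu
    rwa [Matrix.nonsing_inv_nonsing_inv Q hQu] at this
  -- Step 5: trace (Q * D) = 0 for all symmetric Q
  have step5 : ∀ Q : Matrix (Fin n) (Fin n) ℂ, Q.IsSymm → Matrix.trace (Q * D) = 0 := by
    intro Q hQ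
    have hpol : ((-Q).charpoly) ≠ 0 := (Matrix.charpoly_monic _).ne_zero
    have hfin : {t : ℂ | ((-Q).charpoly).IsRoot t}.Finite :=
      Polynomial.finite_setOf_isRoot hpol
    have hinf : {t : ℂ | ((-Q).charpoly).IsRoot t}ᶜ.Infinite := hfin.infinite_compl
    obtain ⟨t₁, ht₁⟩ := hinf.nonempty
    have hinf2 : ({t : ℂ | ((-Q).charpoly).IsRoot t}ᶜ \ {t₁}).Infinite :=
      hinf.diff (Set.finite_singleton t₁)
    obtain ⟨t₂, ht₂⟩ := hinf2.nonempty
    have key : ∀ t : ℂ, ¬ ((-Q).charpoly).IsRoot t →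
        Matrix.trace (Q * D) + t * Matrix.trace D = 0 := by
      intro t ht
      have hdet : (Q + t • 1).det ≠ 0 := by
        intro hc
        apply ht
        rw [Polynomial.IsRoot, eval_charpoly', sub_neg_eq_add]
        rw [add_comm] at hc
        exact hc
      have hsymm : (Q + t • 1).IsSymm := hQ.add ((Matrix.isSymm_one).smul t)
      have := step4 (Q + t • 1) hsymm (isUnit_iff_ne_zero.mpr hdet)
      rwa [Matrix.add_mul, Matrix.trace_add, Matrix.smul_mul, Matrix.one_mul,
        Matrix.trace_smul, smul_eq_mul] at this
    have e1 := key t₁ ht₁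
    have e2 := key t₂ ht₂.1
    have hne : t₁ ≠ t₂ := fun hc => ht₂.2 hc.symm
    have hTrD : Matrix.trace D = 0 := by
      have h3 : (t₁ - t₂) * Matrix.trace D = 0 := by linear_combination e1 - e2
      rcases mul_eq_zero.mp h3 with h4 | h4
      · exact absurd (sub_eq_zero.mp h4) hne
      · exact h4
    have := e1
    rw [hTrD, mul_zero, add_zero] at this
    exact this
  -- Step 6: conclude D = 0 via standard basis matrices
  ext i j
  have hE : (Matrix.single i j (1 : ℂ) + Matrix.single j i 1).IsSymm := by
    rw [Matrix.IsSymm, Matrix.transpose_add, transpose_stdBasisMatrix',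
      transpose_stdBasisMatrix', add_comm]
  have := step5 _ hE
  rw [Matrix.add_mul, Matrix.trace_add, trace_stdBasisMatrix_mul, trace_stdBasisMatrix_mul,
    hD.apply j i] at this
  have h2 : (2 : ℂ) * D j i = 0 := by rw [two_mul]; exact this
  have h0 : D j i = 0 := by
    rcases mul_eq_zero.mp h2 with h' | h'
    · norm_num at h'
    · exact h'
  rw [hD.apply j i]
  simpa using h0
end

section
/- Let n ≥ 1, let α and β be real symmetric n×n matrices with α positive definite, and set ω = β + iα (an n×n complex matrix). Define the ℝ-linear map κ : ℝⁿ × ℝⁿ → ℂⁿ by κ(u, v) = u − ω·v (where u ∈ ℝⁿ is regarded as a complex vector and ω·v is matrix-vector multiplication). Then: (1) κ is bijective; and (2) for all u, v ∈ ℝⁿ one has κ( −βα⁻¹u + (α + βα⁻¹β)v , −α⁻¹u + α⁻¹βv ) = i·κ(u, v). In particular, the ℝ-linear operator J on ℝⁿ × ℝⁿ given by J(u, v) = (−βα⁻¹u + (α + βα⁻¹β)v, −α⁻¹u + α⁻¹βv) satisfies J² = −id. -/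
/-- The computational core of Proposition `mirror-prop`: for real symmetric `n × n`
matrices `α, β` with `α` positive definite and `ω = β + iα`, the `ℝ`-linear map
`κ(u, v) = u − ω·v` from `ℝⁿ × ℝⁿ` to `ℂⁿ` is bijective, and the operator
`J(u,v) = (−βα⁻¹u + (α + βα⁻¹β)v, −α⁻¹u + α⁻¹βv)` corresponds under `κ` to
multiplication by `i`; in particular `J² = −id`. -/
theorem mirror_complex_structure
    (n : ℕ) (hn : 1 ≤ n)
    (α β : Matrix (Fin n) (Fin n) ℝ) (hα : α.IsSymm) (hβ : β.IsSymm) (hαpos : α.PosDef)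
    (ω : Matrix (Fin n) (Fin n) ℂ)
    (hω : ω = β.map (fun x => (x : ℂ)) + Complex.I • α.map (fun x => (x : ℂ)))
    (κ : (Fin n → ℝ) × (Fin n → ℝ) → (Fin n → ℂ))
    (hκ : ∀ u v : Fin n → ℝ,
      κ (u, v) = (fun i => (u i : ℂ)) - ω.mulVec (fun i => ((v i : ℂ))))
    (J : (Fin n → ℝ) × (Fin n → ℝ) → (Fin n → ℝ) × (Fin n → ℝ))
    (hJ : ∀ u v : Fin n → ℝ,
      J (u, v) = (-((β * α⁻¹).mulVec u) + (α + β * α⁻¹ * β).mulVec v,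
                  -(α⁻¹.mulVec u) + (α⁻¹ * β).mulVec v)) :
    Function.Bijective κ ∧
      (∀ u v : Fin n → ℝ, κ (J (u, v)) = fun i => Complex.I * κ (u, v) i) ∧
      (∀ p : (Fin n → ℝ) × (Fin n → ℝ), J (J p) = -p) := by
  have hαdet : IsUnit α.det := by
    simpa [isUnit_iff_ne_zero] using hαpos.det_pos.ne'
  have hαinv : α * α⁻¹ = 1 := Matrix.mul_nonsing_inv α hαdet
  have hinvα : α⁻¹ * α = 1 := Matrix.nonsing_inv_mul α hαdet
  -- coercion helpers
  have hmv : ∀ (M : Matrix (Fin n) (Fin n) ℝ) (w : Fin n → ℝ),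
      (fun i => ((M.mulVec w) i : ℂ))
        = (M.map (fun x => (x:ℂ))).mulVec (fun i => (w i : ℂ)) := by
    intro M w; funext i
    simp [Matrix.mulVec, dotProduct]
  have hadd : ∀ (M N : Matrix (Fin n) (Fin n) ℝ),
      (M+N).map (fun x => (x:ℂ)) = M.map (fun x => (x:ℂ)) + N.map (fun x => (x:ℂ)) := by
    intro M N; ext i j; simp [Matrix.map_apply]
  have hmul : ∀ (M N : Matrix (Fin n) (Fin n) ℝ),
      (M*N).map (fun x => (x:ℂ)) = M.map (fun x => (x:ℂ)) * N.map (fun x => (x:ℂ)) :=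
    fun M N => Matrix.map_mul (f := Complex.ofRealHom)
  -- entrywise description of κ
  have hκ' : ∀ u v : Fin n → ℝ, ∀ i, κ (u, v) i
      = ((u i - β.mulVec v i : ℝ) : ℂ) + Complex.I * ((-(α.mulVec v i) : ℝ) : ℂ) := by
    intro u v i
    rw [hκ, hω]
    have b1 := congrFun (hmv β v) i
    have b2 := congrFun (hmv α v) i
    simp only [Pi.sub_apply, Matrix.add_mulVec, Matrix.smul_mulVec, Pi.add_apply,
      Pi.smul_apply, smul_eq_mul, ← b1, ← b2]
    push_cast
    ring
  have hκre : ∀ u v : Fin n → ℝ, ∀ i, (κ (u, v) i).re = u i - β.mulVec v i := by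
    intro u v i; rw [hκ' u v i]; simp
  have hκim : ∀ u v : Fin n → ℝ, ∀ i, (κ (u, v) i).im = -(α.mulVec v i) := by
    intro u v i; rw [hκ' u v i]; simp
  constructor
  · -- bijectivity via explicit inverse
    rw [Function.bijective_iff_has_inverse]
    refine ⟨fun w => ((fun i => (w i).re) + β.mulVec (-(α⁻¹.mulVec (fun i => (w i).im))),
        -(α⁻¹.mulVec (fun i => (w i).im))), ?_, ?_⟩
    · rintro ⟨u, v⟩
      have him : (fun i => (κ (u, v) i).im) = -(α.mulVec v) := by
        funext i; rw [hκim]; simp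
      have hre : (fun i => (κ (u, v) i).re) = u - β.mulVec v := by
        funext i; rw [hκre]; simp [sub_eq_add_neg]
      have hv : -(α⁻¹.mulVec (-(α.mulVec v))) = v := by
        rw [Matrix.mulVec_neg, neg_neg, Matrix.mulVec_mulVec, hinvα, Matrix.one_mulVec]
      simp only [him, hre, hv]
      refine Prod.ext ?_ rfl
      funext i
      simp [sub_eq_add_neg, add_assoc]
    · intro w
      set v : Fin n → ℝ := -(α⁻¹.mulVec (fun i => (w i).im)) with hvdef
      set u : Fin n → ℝ := (fun i => (w i).re) + β.mulVec v with hudef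
      have hav : α.mulVec v = -(fun i => (w i).im) := by
        rw [hvdef, Matrix.mulVec_neg, Matrix.mulVec_mulVec, hαinv, Matrix.one_mulVec]
      funext i
      rw [hκ' u v i]
      have h1 : u i - (β.mulVec v) i = (w i).re := by simp [hudef]
      have h2 : -(α.mulVec v i) = (w i).im := by
        have := congrFun hav i; simp at this; simp [this]
      rw [h1, h2]
      push_cast
      rw [mul_comm]
      exact Complex.re_add_im (w i)
  have hmid : ∀ u v : Fin n → ℝ, κ (J (u, v)) = fun i => Complex.I * κ (u, v) i := by
    intro u v
    rw [hJ u v, hκ, hκ u v, hω]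
    set U : Fin n → ℂ := fun i => (u i : ℂ) with hU
    set V : Fin n → ℂ := fun i => (v i : ℂ) with hV
    set A : Matrix (Fin n) (Fin n) ℂ := α.map (fun x => (x:ℂ)) with hA
    set A' : Matrix (Fin n) (Fin n) ℂ := (α⁻¹).map (fun x => (x:ℂ)) with hA'
    set B : Matrix (Fin n) (Fin n) ℂ := β.map (fun x => (x:ℂ)) with hB
    have hAA' : A * A' = 1 := by
      rw [hA, hA', ← hmul, hαinv]; simp
    have e1 : (fun i => (((-((β * α⁻¹).mulVec u) + (α + β * α⁻¹ * β).mulVec v)) i : ℂ))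
        = -((B * A').mulVec U) + (A + B * A' * B).mulVec V := by
      funext i
      have b1 := congrFun (hmv (β * α⁻¹) u) i
      have b2 := congrFun (hmv (α + β * α⁻¹ * β) v) i
      have m1 : (β * α⁻¹).map (fun x => (x:ℂ)) = B * A' := hmul _ _
      have m2 : (α + β * α⁻¹ * β).map (fun x => (x:ℂ)) = A + B * A' * B := by
        rw [hadd, hmul, hmul]
      rw [m1] at b1
      rw [m2] at b2
      simp only [Pi.add_apply, Pi.neg_apply]
      push_cast
      rw [b1, b2]
    have e2 : (fun i => (((-(α⁻¹.mulVec u) + (α⁻¹ * β).mulVec v)) i : ℂ))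
        = -(A'.mulVec U) + (A' * B).mulVec V := by
      funext i
      have b1 := congrFun (hmv α⁻¹ u) i
      have b2 := congrFun (hmv (α⁻¹ * β) v) i
      rw [hmul] at b2
      simp only [Pi.add_apply, Pi.neg_apply]
      push_cast
      rw [b1, b2]
    rw [e1, e2]
    show -((B * A').mulVec U) + (A + B * A' * B).mulVec V
        - (B + Complex.I • A).mulVec (-(A'.mulVec U) + (A' * B).mulVec V)
        = fun i => Complex.I * ((U - (B + Complex.I • A).mulVec V) i)
    have goal2 : (fun i => Complex.I * ((U - (B + Complex.I • A).mulVec V) i))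
        = Complex.I • (U - (B + Complex.I • A).mulVec V) := rfl
    rw [goal2]
    have hAA'v : ∀ w : Fin n → ℂ, A.mulVec (A'.mulVec w) = w := by
      intro w; rw [Matrix.mulVec_mulVec, hAA', Matrix.one_mulVec]
    have expand : -((B * A').mulVec U) + (A + B * A' * B).mulVec V
        - (B + Complex.I • A).mulVec (-(A'.mulVec U) + (A' * B).mulVec V)
        = A.mulVec V + Complex.I • U - Complex.I • (B.mulVec V) := by
      simp only [Matrix.add_mulVec, Matrix.mulVec_add, Matrix.mulVec_neg,
        Matrix.smul_mulVec]
      rw [show (B * A').mulVec U = B.mulVec (A'.mulVec U) by rw [Matrix.mulVec_mulVec],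
        show (B * A' * B).mulVec V = B.mulVec (A'.mulVec (B.mulVec V)) by
          rw [Matrix.mulVec_mulVec, Matrix.mulVec_mulVec],
        show (A' * B).mulVec V = A'.mulVec (B.mulVec V) by rw [Matrix.mulVec_mulVec]]
      rw [hAA'v U, hAA'v (B.mulVec V)]
      module
    rw [expand]
    rw [show Complex.I • (U - (B + Complex.I • A).mulVec V)
        = Complex.I • U - Complex.I • (B.mulVec V) - Complex.I • (Complex.I • (A.mulVec V)) by
      simp only [Matrix.add_mulVec, Matrix.smul_mulVec]
      module]
    rw [smul_smul, Complex.I_mul_I, neg_one_smul]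
    module
  refine ⟨hmid, ?_⟩
  -- J ∘ J = -id, via injectivity of κ
  have hinj : Function.Injective κ := by
    intro p q hpq
    obtain ⟨u1, v1⟩ := p
    obtain ⟨u2, v2⟩ := q
    have hv : v1 = v2 := by
      have : α.mulVec v1 = α.mulVec v2 := by
        funext i
        have h1 := hκim u1 v1 i
        have h2 := hκim u2 v2 i
        rw [hpq] at h1
        have := h1.symm.trans h2
        linarith
      calc v1 = (α⁻¹ * α).mulVec v1 := by rw [hinvα, Matrix.one_mulVec]
        _ = α⁻¹.mulVec (α.mulVec v1) := by rw [Matrix.mulVec_mulVec]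
        _ = α⁻¹.mulVec (α.mulVec v2) := by rw [this]
        _ = (α⁻¹ * α).mulVec v2 := by rw [Matrix.mulVec_mulVec]
        _ = v2 := by rw [hinvα, Matrix.one_mulVec]
    have hu : u1 = u2 := by
      funext i
      have h1 := hκre u1 v1 i
      have h2 := hκre u2 v2 i
      rw [hpq] at h1
      have := h1.symm.trans h2
      rw [hv] at this
      linarith
    rw [hu, hv]
  rintro ⟨u, v⟩
  apply hinj
  have h1 : κ (J (J (u, v))) = fun i => Complex.I * (Complex.I * κ (u, v) i) := by
    rw [hJ u v, hmid, ← hJ u v, hmid u v]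
  have h2 : κ (-(u, v)) = fun i => -(κ (u, v) i) := by
    have : -(u, v) = ((-u : Fin n → ℝ), (-v : Fin n → ℝ)) := rfl
    rw [this]
    funext i
    rw [hκ' (-u) (-v) i, hκ' u v i]
    simp only [Pi.neg_apply, Matrix.mulVec_neg]
    push_cast
    ring
  rw [h1, h2]
  funext i
  rw [← mul_assoc, Complex.I_mul_I]
  ring
end
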